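/- Let F be a finite field of cardinality q where q = 6t+1 for some natural number t ≥ 1, and suppose that (2 : F)^6 ≠ 1. Then there exists a subset C of the nonzero elements of F with |C| = t such that (i) distinct elements of C lie in distinct cosets of the subgroup H = {u ∈ Fˣ : u^6 = 1} of sixth roots of unity (so C is a complete set of coset representatives of H in Fˣ), and (ii) for every c ∈ C, either 2c ∈ C or c/2 ∈ C. -/

import Mathlib

/-- In a finite field of cardinality `q = 6t + 1` in which `2` is not a sixth
root of unity, there is a complete set `C` of representatives for the cosets of
the sixth roots of unity in `Fˣ` such that for every `c ∈ C`, either `2c ∈ C`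
or `c/2 ∈ C`. -/
theorem stmt17 {F : Type*} [Field F] [Fintype F] [DecidableEq F]
    (q t : ℕ) (hq : Fintype.card F = q) (ht : 1 ≤ t) (hqt : q = 6 * t + 1)
    (h2 : (2 : F) ^ 6 ≠ 1) :
    ∃ C : Finset F, C.card = t ∧ (∀ c ∈ C, c ≠ 0) ∧
      (∀ c ∈ C, ∀ d ∈ C, c ^ 6 = d ^ 6 → c = d) ∧
      (∀ x : F, x ≠ 0 → ∃ c ∈ C, ∃ u : F, u ^ 6 = 1 ∧ x = c * u) ∧
      (∀ c ∈ C, 2 * c ∈ C ∨ c / 2 ∈ C) := by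
  classical
  have hcard : Fintype.card F = 6 * t + 1 := by rw [hq, hqt]
  -- `2 ≠ 0` in `F` since the characteristic is odd
  have h2F : (2 : F) ≠ 0 := by
    intro h0
    have hp : (ringChar F) ∣ 2 := by
      have := (CharP.cast_eq_zero_iff F (ringChar F) 2).mp (by exact_mod_cast h0)
      exact this
    have hprime : (ringChar F).Prime := CharP.char_is_prime F (ringChar F)
    have hchar2 : ringChar F = 2 :=
      ((Nat.prime_dvd_prime_iff_eq hprime Nat.prime_two).mp hp)
    have heven := FiniteField.even_card_of_char_two hchar2
    rw [hcard] at heven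
    omega
  set u2 : Fˣ := Units.mk0 (2 : F) h2F with hu2
  set H : Subgroup Fˣ := MonoidHom.ker (powMonoidHom 6 : Fˣ →* Fˣ) with hH
  have hmemH : ∀ a : Fˣ, a ∈ H ↔ a ^ 6 = 1 := fun a => by
    rw [hH, MonoidHom.mem_ker, powMonoidHom_apply]
  have hcardU : Fintype.card Fˣ = 6 * t := by
    rw [Fintype.card_units, hcard]; omega
  -- `H` has exactly 6 elements
  have hH6 : Nat.card H = 6 := by
    obtain ⟨g, hg⟩ := IsCyclic.exists_generator (α := Fˣ)
    have hog : orderOf g = 6 * t := by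
      rw [orderOf_eq_card_of_forall_mem_zpowers hg, Nat.card_eq_fintype_card, hcardU]
    have hat : orderOf (g ^ t) = 6 := by
      rw [orderOf_pow, hog, Nat.gcd_comm, Nat.gcd_eq_left (dvd_mul_left t 6),
        Nat.mul_div_cancel _ (by omega : 0 < t)]
    have hle : Subgroup.zpowers (g ^ t) ≤ H := by
      refine Subgroup.zpowers_le.mpr ((hmemH _).mpr ?_)
      rw [← pow_mul, mul_comm t 6, ← hog, pow_orderOf_eq_one]
    have h6le : 6 ≤ Nat.card H := by
      have h := Subgroup.card_le_of_le hle
      rwa [Nat.card_zpowers, hat] at h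
    have hle6 : Nat.card H ≤ 6 := by
      have hfil : Nat.card H = (Finset.univ.filter (fun a : Fˣ => a ^ 6 = 1)).card := by
        rw [Nat.card_eq_fintype_card, ← Fintype.card_subtype]
        exact Fintype.card_congr (Equiv.subtypeEquivRight (fun a => hmemH a))
      rw [hfil]
      exact IsCyclic.card_pow_eq_one_le (by norm_num)
    omega
  -- the quotient by `H` has `t` elements
  have hcardQ : Nat.card (Fˣ ⧸ H) = t := by
    have h := Subgroup.card_eq_card_quotient_mul_card_subgroup H
    rw [hH6, Nat.card_eq_fintype_card, hcardU] at h
    omega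
  set z : Fˣ ⧸ H := QuotientGroup.mk u2 with hz
  have hzne : z ≠ 1 := by
    intro h
    rw [hz, QuotientGroup.eq_one_iff, hmemH] at h
    apply h2
    have : ((u2 ^ 6 : Fˣ) : F) = 1 := by rw [h, Units.val_one]
    simpa [hu2] using this
  set m := orderOf z with hm
  have hmpos : 0 < m := orderOf_pos z
  have hm1 : m ≠ 1 := fun h => hzne (orderOf_eq_one_iff.mp h)
  have hm2 : 2 ≤ m := by omega
  set Z : Subgroup (Fˣ ⧸ H) := Subgroup.zpowers z with hZ
  haveI hZN : Z.Normal := Subgroup.normal_of_comm Z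
  have hcardWm : Nat.card ((Fˣ ⧸ H) ⧸ Z) * m = t := by
    have h := Subgroup.card_eq_card_quotient_mul_card_subgroup Z
    rw [Nat.card_zpowers, hcardQ, ← hm] at h
    omega
  set x0 : (Fˣ ⧸ H) ⧸ Z → Fˣ := fun w => (Quotient.out w).out with hx0
  have hx0q : ∀ w : (Fˣ ⧸ H) ⧸ Z, (QuotientGroup.mk (x0 w) : Fˣ ⧸ H) = Quotient.out w :=
    fun w => (Quotient.out w).out_eq'
  have hwout : ∀ w : (Fˣ ⧸ H) ⧸ Z,
      (QuotientGroup.mk (Quotient.out w) : (Fˣ ⧸ H) ⧸ Z) = w := fun w => w.out_eq'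
  set φ : ((Fˣ ⧸ H) ⧸ Z) × Fin m → Fˣ := fun p => x0 p.1 * u2 ^ (p.2 : ℕ) with hφ
  set β : ((Fˣ ⧸ H) ⧸ Z) × Fin m → Fˣ ⧸ H := fun p => Quotient.out p.1 * z ^ (p.2 : ℕ) with hβ
  have hclass : ∀ p, (QuotientGroup.mk (φ p) : Fˣ ⧸ H) = β p := by
    intro p
    show (QuotientGroup.mk (x0 p.1 * u2 ^ (p.2 : ℕ)) : Fˣ ⧸ H) = _
    rw [QuotientGroup.mk_mul, QuotientGroup.mk_pow, hx0q]
  have hz1 : ∀ i : ℕ, (QuotientGroup.mk (z ^ i) : (Fˣ ⧸ H) ⧸ Z) = 1 := by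
    intro i
    rw [QuotientGroup.eq_one_iff]
    exact Subgroup.pow_mem Z (Subgroup.mem_zpowers z) i
  have hβfst : ∀ p, (QuotientGroup.mk (β p) : (Fˣ ⧸ H) ⧸ Z) = p.1 := by
    intro p
    show (QuotientGroup.mk (Quotient.out p.1 * z ^ (p.2 : ℕ)) : (Fˣ ⧸ H) ⧸ Z) = p.1
    rw [QuotientGroup.mk_mul, hz1, mul_one, hwout]
  have hβinj : Function.Injective β := by
    intro p p' h
    have hfst : p.1 = p'.1 := by
      rw [← hβfst p, ← hβfst p', h]
    have hsnd : p.2 = p'.2 := by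
      have h' : Quotient.out p'.1 * z ^ (p.2 : ℕ) = Quotient.out p'.1 * z ^ (p'.2 : ℕ) := by
        have hh := h
        rw [hβ] at hh
        simp only at hh
        rw [hfst] at hh
        exact hh
      have hzz : z ^ (p.2 : ℕ) = z ^ (p'.2 : ℕ) := mul_left_cancel h'
      exact Fin.ext (pow_injOn_Iio_orderOf (by exact p.2.2) (by exact p'.2.2) hzz)
    exact Prod.ext hfst hsnd
  have hβsurj : Function.Surjective β := by
    intro qq
    have hmem : (Quotient.out (QuotientGroup.mk qq : (Fˣ ⧸ H) ⧸ Z))⁻¹ * qq ∈ Z :=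
      QuotientGroup.eq.mp (hwout _)
    rw [hZ, ← mem_powers_iff_mem_zpowers] at hmem
    obtain ⟨n, hn⟩ := hmem
    simp only at hn
    refine ⟨(QuotientGroup.mk qq, ⟨n % m, Nat.mod_lt _ hmpos⟩), ?_⟩
    show Quotient.out (QuotientGroup.mk qq : (Fˣ ⧸ H) ⧸ Z) * z ^ (n % m) = qq
    have hnm : z ^ (n % m) = z ^ n := by rw [hm]; exact pow_mod_orderOf z n
    rw [hnm, hn, mul_inv_cancel_left]
  -- the finset
  haveI : Fintype (Fˣ ⧸ H) := Fintype.ofFinite _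
  haveI : Fintype ((Fˣ ⧸ H) ⧸ Z) := Fintype.ofFinite _
  have hφinj : Function.Injective (fun p => ((φ p : Fˣ) : F)) := by
    intro p p' h
    apply hβinj
    rw [← hclass, ← hclass]
    congr 1
    exact Units.ext h
  set C : Finset F := Finset.image (fun p : ((Fˣ ⧸ H) ⧸ Z) × Fin m => ((φ p : Fˣ) : F))
    Finset.univ with hC
  have hmemC : ∀ {c : F}, c ∈ C → ∃ p, ((φ p : Fˣ) : F) = c := by
    intro c hc
    rw [hC, Finset.mem_image] at hc
    obtain ⟨p, _, hp⟩ := hc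
    exact ⟨p, hp⟩
  have hCmem : ∀ p, ((φ p : Fˣ) : F) ∈ C := by
    intro p
    rw [hC, Finset.mem_image]
    exact ⟨p, Finset.mem_univ p, rfl⟩
  refine ⟨C, ?_, ?_, ?_, ?_, ?_⟩
  · -- card
    rw [hC, Finset.card_image_of_injective _ hφinj, Finset.card_univ, Fintype.card_prod,
      Fintype.card_fin, ← Nat.card_eq_fintype_card, hcardWm]
  · -- nonzero
    intro c hc
    obtain ⟨p, hp⟩ := hmemC hc
    rw [← hp]
    exact Units.ne_zero _
  · -- distinct sixth powers
    intro c hc d hd hcd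
    obtain ⟨p, hp⟩ := hmemC hc
    obtain ⟨p', hp'⟩ := hmemC hd
    rw [← hp, ← hp']
    have h6 : (φ p) ^ 6 = (φ p') ^ 6 := by
      apply Units.ext
      rw [Units.val_pow_eq_pow_val, Units.val_pow_eq_pow_val, hp, hp', hcd]
    have hsame : (QuotientGroup.mk (φ p) : Fˣ ⧸ H) = QuotientGroup.mk (φ p') := by
      apply QuotientGroup.eq.mpr
      rw [hmemH, mul_pow, inv_pow, h6, inv_mul_cancel]
    rw [hclass, hclass] at hsame
    rw [hβinj hsame]
  · -- covers all cosets
    intro x hx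
    set ux : Fˣ := Units.mk0 x hx with hux
    obtain ⟨p, hp⟩ := hβsurj (QuotientGroup.mk ux)
    have hsame : (QuotientGroup.mk (φ p) : Fˣ ⧸ H) = QuotientGroup.mk ux := by
      rw [hclass, hp]
    have hu : (φ p)⁻¹ * ux ∈ H := QuotientGroup.eq.mp hsame
    refine ⟨((φ p : Fˣ) : F), hCmem p, (((φ p)⁻¹ * ux : Fˣ) : F), ?_, ?_⟩
    · rw [← Units.val_pow_eq_pow_val, (hmemH _).mp hu, Units.val_one]
    · rw [← Units.val_mul, mul_inv_cancel_left]
      rfl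
  · -- closure under doubling/halving
    intro c hc
    obtain ⟨⟨w, i⟩, hp⟩ := hmemC hc
    have h2v : (u2 : F) = 2 := rfl
    by_cases hi : (i : ℕ) + 1 < m
    · left
      have hstep : 2 * c = ((φ (w, ⟨(i : ℕ) + 1, hi⟩) : Fˣ) : F) := by
        rw [← hp, hφ]
        simp only
        rw [Units.val_mul, Units.val_mul, Units.val_pow_eq_pow_val,
          Units.val_pow_eq_pow_val, h2v, pow_succ]
        ring
      rw [hstep]
      exact hCmem _
    · right
      have hi1 : 1 ≤ (i : ℕ) := by
        have := i.2
        omega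
      have hilt : (i : ℕ) - 1 < m := by omega
      have hstep : c / 2 = ((φ (w, ⟨(i : ℕ) - 1, hilt⟩) : Fˣ) : F) := by
        rw [← hp, hφ]
        simp only
        rw [Units.val_mul, Units.val_mul, Units.val_pow_eq_pow_val,
          Units.val_pow_eq_pow_val, h2v]
        have hsucc : (i : ℕ) = ((i : ℕ) - 1) + 1 := by omega
        rw [hsucc, pow_succ]
        field_simp
        rw [Nat.add_sub_cancel]
      rw [hstep]
      exact hCmem _
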